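/- arXiv:2408.01326 — 2 statements merged into one kernel-verified Lean document; each statement's English description precedes it below -/
import Mathlib

section
/- Let e_{1},…,e_{a} and f_{1},…,f_{b} be mutually independent Rademacher variables and v ∈ ℝ a constant, and more generally for i = 1,…,n let e_{i1ℓ} (ℓ ≤ N_{i1}) and e_{i2m} (m ≤ N_{i2}) be independent Rademacher variables and v_i ∈ ℝ. Then for any τ > 0, P(|∑_{i=1}^n v_i (∑_{ℓ=1}^{N_{i1}} e_{i1ℓ})(∑_{m=1}^{N_{i2}} e_{i2m})| > τ · ω) ≤ 4 exp(−τ²/2), where ω² = min(∑_i v_i² N_{i1}² N_{i2}, ∑_i v_i² N_{i1} N_{i2}²). -/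
open MeasureTheory ProbabilityTheory


lemma rad_aux {Ω : Type*} [MeasurableSpace Ω] {μ : Measure Ω} [IsProbabilityMeasure μ]
    {X : Ω → ℝ} (hm : Measurable X) (h1 : μ {ω | X ω = 1} = 1 / 2)
    (h2 : μ {ω | X ω = -1} = 1 / 2) :
    (∀ᵐ ω ∂μ, X ω = 1 ∨ X ω = -1) ∧ ∫ ω, X ω ∂μ = 0 := by
  have hA : MeasurableSet {ω | X ω = 1} := hm (measurableSet_singleton 1)
  have hB : MeasurableSet {ω | X ω = -1} := hm (measurableSet_singleton (-1))
  have hdis : Disjoint {ω | X ω = 1} {ω | X ω = -1} := by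
    rw [Set.disjoint_left]
    intro ω hω hω'
    simp only [Set.mem_setOf_eq] at hω hω'
    rw [hω] at hω'; norm_num at hω'
  have hunion : μ ({ω | X ω = 1} ∪ {ω | X ω = -1}) = 1 := by
    rw [measure_union hdis hB, h1, h2]
    norm_num
    exact ENNReal.inv_two_add_inv_two
  have hcompl : μ ({ω | X ω = 1} ∪ {ω | X ω = -1})ᶜ = 0 := by
    rw [measure_compl (hA.union hB) (measure_ne_top _ _), hunion, measure_univ]
    simp
  have hae : ∀ᵐ ω ∂μ, X ω = 1 ∨ X ω = -1 := by
    filter_upwards [measure_eq_zero_iff_ae_notMem.mp hcompl] with ω hω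
    exact Set.notMem_compl_iff.mp hω
  refine ⟨hae, ?_⟩
  have heq : X =ᵐ[μ] fun ω => Set.indicator {ω | X ω = 1} (fun _ => (1:ℝ)) ω
      - Set.indicator {ω | X ω = -1} (fun _ => (1:ℝ)) ω := by
    filter_upwards [hae] with ω hω
    rcases hω with h | h
    · have hnb : ω ∉ {ω | X ω = -1} := by simp [Set.mem_setOf_eq, h]; norm_num
      simp [Set.indicator_of_mem (show ω ∈ {ω | X ω = 1} from h),
        Set.indicator_of_notMem hnb, h]
    · have hna : ω ∉ {ω | X ω = 1} := by simp [Set.mem_setOf_eq, h]; norm_num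
      simp [Set.indicator_of_mem (show ω ∈ {ω | X ω = -1} from h),
        Set.indicator_of_notMem hna, h]
  rw [integral_congr_ae heq, integral_sub ((integrable_const (1:ℝ)).indicator hA)
    ((integrable_const (1:ℝ)).indicator hB)]
  rw [integral_indicator_const _ hA, integral_indicator_const _ hB, measureReal_def, measureReal_def, h1, h2]
  simp

lemma iIndepFun_reindex {Ω ι κ : Type*} [MeasurableSpace Ω] {μ : Measure Ω} {β : Type*}
    {mβ : MeasurableSpace β} (g : κ ≃ ι) {f : ι → Ω → β}
    (h : iIndepFun f μ) :
    iIndepFun (fun k => f (g k)) μ := by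
  classical
  rw [iIndepFun_iff_measure_inter_preimage_eq_mul] at h ⊢
  intro S sets hsets
  have key := h (S.image g) (sets := fun i => sets (g.symm i)) (fun i hi => by
    obtain ⟨k, hk, rfl⟩ := Finset.mem_image.1 hi
    simpa using hsets k hk)
  have hset : (⋂ i ∈ S.image g, f i ⁻¹' sets (g.symm i)) = ⋂ k ∈ S, f (g k) ⁻¹' sets k := by
    ext ω
    simp only [Set.mem_iInter, Finset.mem_image]
    constructor
    · intro h' k hk
      have := h' (g k) ⟨k, hk, rfl⟩
      simpa using this
    · rintro h' i ⟨k, hk, rfl⟩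
      simpa using h' k hk
  have hprod : (∏ i ∈ S.image g, μ (f i ⁻¹' sets (g.symm i))) = ∏ k ∈ S, μ (f (g k) ⁻¹' sets k) := by
    rw [Finset.prod_image (fun a _ b _ hab => g.injective hab)]
    simp
  rw [hset, hprod] at key
  exact key


set_option maxHeartbeats 1000000 in
lemma indep_aux {Ω : Type*} [MeasurableSpace Ω] (μ : Measure Ω)
    (n : ℕ) (N1 N2 : Fin n → ℕ) (v : Fin n → ℝ)
    (e : ((Σ i : Fin n, Fin (N1 i)) ⊕ (Σ i : Fin n, Fin (N2 i))) → Ω → ℝ)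
    (hmeas : ∀ a, Measurable (e a))
    (hindep : iIndepFun e μ)
    (t : ℝ) (j₀ : Σ i : Fin n, Fin (N2 i)) (s : Finset (Σ i : Fin n, Fin (N2 i)))
    (hj₀ : j₀ ∉ s) :
    IndepFun
      (fun ω => Real.exp (t * ∑ j ∈ s,
          (v j.1 * ∑ ℓ : Fin (N1 j.1), e (Sum.inl ⟨j.1, ℓ⟩) ω) * e (Sum.inr j) ω) *
        Real.sinh (t * (v j₀.1 * ∑ ℓ : Fin (N1 j₀.1), e (Sum.inl ⟨j₀.1, ℓ⟩) ω)))
      (e (Sum.inr j₀)) μ := by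
  classical
  have hdis : Disjoint (Finset.univ.erase (Sum.inr j₀))
      ({Sum.inr j₀} : Finset ((Σ i : Fin n, Fin (N1 i)) ⊕ (Σ i : Fin n, Fin (N2 i)))) :=
    Finset.disjoint_singleton_right.mpr (Finset.notMem_erase _ _)
  have h0 := hindep.indepFun_finset _ _ hdis hmeas
  let ext : ((Finset.univ.erase (Sum.inr j₀) :
        Finset ((Σ i : Fin n, Fin (N1 i)) ⊕ (Σ i : Fin n, Fin (N2 i)))) → ℝ) →
      (((Σ i : Fin n, Fin (N1 i)) ⊕ (Σ i : Fin n, Fin (N2 i))) → ℝ) :=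
    fun p a => if h : a ∈ Finset.univ.erase (Sum.inr j₀) then p ⟨a, h⟩ else 0
  have hextmeas : Measurable ext := by
    apply measurable_pi_lambda
    intro a
    by_cases h : a ∈ Finset.univ.erase (Sum.inr j₀)
    · simp only [ext, dif_pos h]
      exact measurable_pi_apply _
    · simp only [ext, dif_neg h]
      exact measurable_const
  let G : (((Σ i : Fin n, Fin (N1 i)) ⊕ (Σ i : Fin n, Fin (N2 i))) → ℝ) → ℝ := fun q =>
    Real.exp (t * ∑ j ∈ s, (v j.1 * ∑ ℓ : Fin (N1 j.1), q (Sum.inl ⟨j.1, ℓ⟩)) *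
      q (Sum.inr j)) *
    Real.sinh (t * (v j₀.1 * ∑ ℓ : Fin (N1 j₀.1), q (Sum.inl ⟨j₀.1, ℓ⟩)))
  have hGmeas : Measurable G := by
    apply Measurable.mul
    · apply Real.measurable_exp.comp
      apply (Finset.measurable_sum s fun j _ => ?_).const_mul
      exact ((Finset.measurable_sum Finset.univ fun ℓ _ =>
        measurable_pi_apply (Sum.inl ⟨j.1, ℓ⟩ : (Σ i : Fin n, Fin (N1 i)) ⊕ (Σ i : Fin n, Fin (N2 i)))).const_mul _).mul (measurable_pi_apply _)
    · apply Real.measurable_sinh.comp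
      exact ((Finset.measurable_sum Finset.univ fun ℓ _ =>
        measurable_pi_apply (Sum.inl ⟨j₀.1, ℓ⟩ : (Σ i : Fin n, Fin (N1 i)) ⊕ (Σ i : Fin n, Fin (N2 i)))).const_mul _).const_mul _
  have hcoord : ∀ (ω : Ω) (a : ((Σ i : Fin n, Fin (N1 i)) ⊕ (Σ i : Fin n, Fin (N2 i)))),
      a ≠ Sum.inr j₀ →
      ext (fun b : (Finset.univ.erase (Sum.inr j₀) :
          Finset ((Σ i : Fin n, Fin (N1 i)) ⊕ (Σ i : Fin n, Fin (N2 i)))) => e b ω) a = e a ω := by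
    intro ω a ha
    simp only [ext, dif_pos (Finset.mem_erase.2 ⟨ha, Finset.mem_univ _⟩)]
  have hBeq : (fun ω => Real.exp (t * ∑ j ∈ s,
        (v j.1 * ∑ ℓ : Fin (N1 j.1), e (Sum.inl ⟨j.1, ℓ⟩) ω) * e (Sum.inr j) ω) *
      Real.sinh (t * (v j₀.1 * ∑ ℓ : Fin (N1 j₀.1), e (Sum.inl ⟨j₀.1, ℓ⟩) ω))) =
      (G ∘ ext) ∘ (fun ω (a : (Finset.univ.erase (Sum.inr j₀) :
        Finset ((Σ i : Fin n, Fin (N1 i)) ⊕ (Σ i : Fin n, Fin (N2 i))))) => e a ω) := by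
    funext ω
    have h1 : (∑ j ∈ s, (v j.1 * ∑ ℓ : Fin (N1 j.1),
        ext (fun b => e b ω) (Sum.inl ⟨j.1, ℓ⟩)) * ext (fun b => e b ω) (Sum.inr j)) =
        ∑ j ∈ s, (v j.1 * ∑ ℓ : Fin (N1 j.1), e (Sum.inl ⟨j.1, ℓ⟩) ω) * e (Sum.inr j) ω := by
      refine Finset.sum_congr rfl fun j hj => ?_
      rw [hcoord ω (Sum.inr j) (by simp only [ne_eq, Sum.inr.injEq]; rintro rfl; exact hj₀ hj)]
      congr 2
      exact Finset.sum_congr rfl fun ℓ _ => hcoord ω (Sum.inl ⟨j.1, ℓ⟩) (by simp)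
    have h2 : (∑ ℓ : Fin (N1 j₀.1), ext (fun b => e b ω) (Sum.inl ⟨j₀.1, ℓ⟩)) =
        ∑ ℓ : Fin (N1 j₀.1), e (Sum.inl ⟨j₀.1, ℓ⟩) ω :=
      Finset.sum_congr rfl fun ℓ _ => hcoord ω (Sum.inl ⟨j₀.1, ℓ⟩) (by simp)
    simp only [Function.comp_apply, G]
    rw [h1, h2]
  have hfeq : e (Sum.inr j₀) =
      (fun p : (({Sum.inr j₀} : Finset ((Σ i : Fin n, Fin (N1 i)) ⊕
          (Σ i : Fin n, Fin (N2 i)))) → ℝ) => p ⟨Sum.inr j₀, Finset.mem_singleton_self _⟩) ∘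
        (fun ω (a : ({Sum.inr j₀} : Finset ((Σ i : Fin n, Fin (N1 i)) ⊕
          (Σ i : Fin n, Fin (N2 i))))) => e a ω) := rfl
  rw [hBeq, hfeq]
  exact h0.comp (hGmeas.comp hextmeas) (measurable_pi_apply _)


theorem mgf_aux {Ω : Type*} [MeasurableSpace Ω] (μ : Measure Ω) [IsProbabilityMeasure μ]
    (n : ℕ) (N1 N2 : Fin n → ℕ) (v : Fin n → ℝ)
    (e : ((Σ i : Fin n, Fin (N1 i)) ⊕ (Σ i : Fin n, Fin (N2 i))) → Ω → ℝ)
    (hmeas : ∀ a, Measurable (e a))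
    (hindep : iIndepFun e μ)
    (hrad : ∀ a, μ {ω | e a ω = 1} = 1 / 2 ∧ μ {ω | e a ω = -1} = 1 / 2) (t : ℝ) :
    ∫ ω, Real.exp (t * ∑ i, v i * (∑ ℓ : Fin (N1 i), e (Sum.inl ⟨i, ℓ⟩) ω) *
      (∑ m : Fin (N2 i), e (Sum.inr ⟨i, m⟩) ω)) ∂μ
      ≤ Real.exp (t ^ 2 * (∑ i, (v i) ^ 2 * (N1 i : ℝ) ^ 2 * (N2 i : ℝ)) / 2) := by
  classical
  set S : Fin n → Ω → ℝ := fun i ω => ∑ ℓ : Fin (N1 i), e (Sum.inl ⟨i, ℓ⟩) ω with hS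
  have hSmeas : ∀ i, Measurable (S i) :=
    fun i => Finset.measurable_sum _ fun ℓ _ => hmeas _
  have hrad' := fun a => rad_aux (hmeas a) (hrad a).1 (hrad a).2
  have hae : ∀ᵐ ω ∂μ, ∀ a : ((Σ i : Fin n, Fin (N1 i)) ⊕ (Σ i : Fin n, Fin (N2 i))), e a ω = 1 ∨ e a ω = -1 :=
    (MeasureTheory.ae_all_iff).2 fun a => (hrad' a).1
  have hSb : ∀ᵐ ω ∂μ, ∀ i, |S i ω| ≤ (N1 i : ℝ) := by
    filter_upwards [hae] with ω hω i
    calc |S i ω| ≤ ∑ ℓ : Fin (N1 i), |e (Sum.inl ⟨i, ℓ⟩) ω| := Finset.abs_sum_le_sum_abs _ _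
    _ ≤ ∑ _ℓ : Fin (N1 i), (1 : ℝ) := by
        refine Finset.sum_le_sum fun ℓ _ => ?_
        rcases hω (Sum.inl ⟨i, ℓ⟩) with h | h <;> rw [h] <;> norm_num
    _ = (N1 i : ℝ) := by simp
  -- generic integrability helper
  have hint : ∀ (g : Ω → ℝ) (C : ℝ), Measurable g → (∀ᵐ ω ∂μ, |g ω| ≤ C) → Integrable g μ :=
    fun g C hg h => Integrable.mono' (integrable_const C) hg.aestronglyMeasurable
      (by simpa [Real.norm_eq_abs] using h)
  -- main induction over finsets of the inr index type
  have key : ∀ s : Finset (Σ i : Fin n, Fin (N2 i)),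
      ∫ ω, Real.exp (t * ∑ j ∈ s, (v j.1 * S j.1 ω) * e (Sum.inr j) ω) ∂μ
        ≤ Real.exp (t ^ 2 * (∑ j ∈ s, (v j.1 * (N1 j.1 : ℝ)) ^ 2) / 2) := by
    intro s
    induction s using Finset.induction_on with
    | empty => simp
    | @insert j₀ s hj₀ ih =>
      set c : Ω → ℝ := fun ω => v j₀.1 * S j₀.1 ω with hc
      set R : Ω → ℝ := fun ω => ∑ j ∈ s, (v j.1 * S j.1 ω) * e (Sum.inr j) ω with hR
      set b : ℝ := |v j₀.1| * (N1 j₀.1 : ℝ) with hb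
      set K : ℝ := ∑ j ∈ s, |v j.1| * (N1 j.1 : ℝ) with hK
      have hcmeas : Measurable c := (hSmeas j₀.1).const_mul _
      have hRmeas : Measurable R :=
        Finset.measurable_sum _ fun j _ => ((hSmeas j.1).const_mul _).mul (hmeas _)
      have hcb : ∀ᵐ ω ∂μ, |c ω| ≤ b := by
        filter_upwards [hSb] with ω hω
        rw [hc, hb, abs_mul]
        exact mul_le_mul_of_nonneg_left (hω j₀.1) (abs_nonneg _)
      have hRb : ∀ᵐ ω ∂μ, |R ω| ≤ K := by
        filter_upwards [hSb, hae] with ω hω hω'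
        calc |R ω| ≤ ∑ j ∈ s, |(v j.1 * S j.1 ω) * e (Sum.inr j) ω| :=
              Finset.abs_sum_le_sum_abs _ _
        _ ≤ ∑ j ∈ s, |v j.1| * (N1 j.1 : ℝ) := by
            refine Finset.sum_le_sum fun j _ => ?_
            rw [abs_mul, abs_mul]
            have h1 : |e (Sum.inr j) ω| ≤ 1 := by
              rcases hω' (Sum.inr j) with h | h <;> rw [h] <;> norm_num
            calc |v j.1| * |S j.1 ω| * |e (Sum.inr j) ω|
                ≤ |v j.1| * (N1 j.1 : ℝ) * |e (Sum.inr j) ω| :=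
                  mul_le_mul_of_nonneg_right
                    (mul_le_mul_of_nonneg_left (hω j.1) (abs_nonneg _)) (abs_nonneg _)
            _ ≤ |v j.1| * (N1 j.1 : ℝ) * 1 :=
                  mul_le_mul_of_nonneg_left h1 (by positivity)
            _ = |v j.1| * (N1 j.1 : ℝ) := mul_one _
      -- a.e. bounds used for integrability
      have hexpR : ∀ᵐ ω ∂μ, Real.exp (t * R ω) ≤ Real.exp (|t| * K) := by
        filter_upwards [hRb] with ω hω
        apply Real.exp_le_exp.2
        calc t * R ω ≤ |t * R ω| := le_abs_self _
        _ = |t| * |R ω| := abs_mul _ _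
        _ ≤ |t| * K := mul_le_mul_of_nonneg_left hω (abs_nonneg _)
      have hcoshc : ∀ᵐ ω ∂μ, Real.cosh (t * c ω) ≤ Real.exp (t ^ 2 * b ^ 2 / 2) := by
        filter_upwards [hcb] with ω hω
        calc Real.cosh (t * c ω) ≤ Real.exp ((t * c ω) ^ 2 / 2) :=
              Real.cosh_le_exp_half_sq _
        _ ≤ Real.exp (t ^ 2 * b ^ 2 / 2) := by
            apply Real.exp_le_exp.2
            have : (c ω) ^ 2 ≤ b ^ 2 := sq_le_sq' (abs_le.1 hω).1 (abs_le.1 hω).2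
            rw [mul_pow]
            nlinarith [sq_nonneg t]
      have hA_int : Integrable (fun ω => Real.exp (t * R ω) * Real.cosh (t * c ω)) μ := by
        refine hint _ (Real.exp (|t| * K) * Real.exp (t ^ 2 * b ^ 2 / 2))
          ((hRmeas.const_mul t).exp.mul (hcmeas.const_mul t).cosh) ?_
        filter_upwards [hexpR, hcoshc] with ω h1 h2
        rw [abs_of_nonneg (by positivity)]
        exact mul_le_mul h1 h2 (by positivity) (Real.exp_nonneg _)
      have hsinh_le : ∀ x : ℝ, |Real.sinh x| ≤ Real.cosh x := fun x => by
        rw [abs_le]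
        constructor
        · nlinarith [Real.cosh_add_sinh x, Real.exp_pos x]
        · nlinarith [Real.cosh_sub_sinh x, Real.exp_pos (-x)]
      have hB_bound : ∀ᵐ ω ∂μ, |Real.exp (t * R ω) * Real.sinh (t * c ω)| ≤
          Real.exp (|t| * K) * Real.exp (t ^ 2 * b ^ 2 / 2) := by
        filter_upwards [hexpR, hcoshc] with ω h1 h2
        rw [abs_mul, abs_of_nonneg (Real.exp_nonneg _)]
        exact mul_le_mul h1 (le_trans (hsinh_le _) h2) (abs_nonneg _) (Real.exp_nonneg _)
      have hBmeas : Measurable (fun ω => Real.exp (t * R ω) * Real.sinh (t * c ω)) :=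
        (hRmeas.const_mul t).exp.mul (hcmeas.const_mul t).sinh
      have hB_int : Integrable (fun ω => Real.exp (t * R ω) * Real.sinh (t * c ω)) μ :=
        hint _ _ hBmeas hB_bound
      have hBf_int : Integrable
          (fun ω => (Real.exp (t * R ω) * Real.sinh (t * c ω)) * e (Sum.inr j₀) ω) μ := by
        refine hint _ (Real.exp (|t| * K) * Real.exp (t ^ 2 * b ^ 2 / 2)) (hBmeas.mul (hmeas _)) ?_
        filter_upwards [hB_bound, hae] with ω h1 h2
        rw [abs_mul]
        have : |e (Sum.inr j₀) ω| ≤ 1 := by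
          rcases h2 (Sum.inr j₀) with h | h <;> rw [h] <;> norm_num
        calc |Real.exp (t * R ω) * Real.sinh (t * c ω)| * |e (Sum.inr j₀) ω|
            ≤ (Real.exp (|t| * K) * Real.exp (t ^ 2 * b ^ 2 / 2)) * 1 :=
              mul_le_mul h1 this (abs_nonneg _) (by positivity)
        _ = _ := mul_one _
      have hBf_indep : IndepFun (fun ω => Real.exp (t * R ω) * Real.sinh (t * c ω))
          (e (Sum.inr j₀)) μ :=
        indep_aux μ n N1 N2 v e hmeas hindep t j₀ s hj₀
      -- the a.e. decomposition
      have hdecomp : ∀ᵐ ω ∂μ,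
          Real.exp (t * ∑ j ∈ insert j₀ s, (v j.1 * S j.1 ω) * e (Sum.inr j) ω) =
            Real.exp (t * R ω) * Real.cosh (t * c ω) +
            (Real.exp (t * R ω) * Real.sinh (t * c ω)) * e (Sum.inr j₀) ω := by
        filter_upwards [hae] with ω hω
        rw [Finset.sum_insert hj₀]
        rcases hω (Sum.inr j₀) with h | h
        · rw [h, mul_one, mul_add, Real.exp_add, mul_one]
          rw [show (v j₀.1 * S j₀.1 ω) = c ω from rfl, ← Real.cosh_add_sinh]
          ring
        · rw [h, mul_neg_one, mul_add, Real.exp_add]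
          rw [show (v j₀.1 * S j₀.1 ω) = c ω from rfl]
          rw [show t * -c ω = -(t * c ω) by ring, ← Real.cosh_sub_sinh]
          ring
      rw [integral_congr_ae hdecomp, integral_add hA_int hBf_int]
      have hzero : ∫ ω, (Real.exp (t * R ω) * Real.sinh (t * c ω)) * e (Sum.inr j₀) ω ∂μ = 0 := by
        have hz : ∫ ω, (Real.exp (t * R ω) * Real.sinh (t * c ω)) * e (Sum.inr j₀) ω ∂μ =
            (∫ ω, Real.exp (t * R ω) * Real.sinh (t * c ω) ∂μ) * ∫ ω, e (Sum.inr j₀) ω ∂μ :=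
          hBf_indep.integral_fun_mul_eq_mul_integral hB_int.aestronglyMeasurable (hmeas _).aestronglyMeasurable
        rw [hz, (hrad' (Sum.inr j₀)).2, mul_zero]
      rw [hzero, add_zero]
      have hmono : ∫ ω, Real.exp (t * R ω) * Real.cosh (t * c ω) ∂μ ≤
          ∫ ω, Real.exp (t ^ 2 * b ^ 2 / 2) * Real.exp (t * R ω) ∂μ := by
        refine integral_mono_ae hA_int ((hint (fun ω => Real.exp (t * R ω))
          (Real.exp (|t| * K)) (hRmeas.const_mul t).exp ?_).const_mul _) ?_
        · filter_upwards [hexpR] with ω h1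
          rw [abs_of_nonneg (Real.exp_nonneg _)]; exact h1
        · filter_upwards [hcoshc] with ω h1
          calc Real.exp (t * R ω) * Real.cosh (t * c ω)
              ≤ Real.exp (t * R ω) * Real.exp (t ^ 2 * b ^ 2 / 2) :=
                mul_le_mul_of_nonneg_left h1 (Real.exp_nonneg _)
          _ = Real.exp (t ^ 2 * b ^ 2 / 2) * Real.exp (t * R ω) := mul_comm _ _
      calc ∫ ω, Real.exp (t * R ω) * Real.cosh (t * c ω) ∂μ
          ≤ ∫ ω, Real.exp (t ^ 2 * b ^ 2 / 2) * Real.exp (t * R ω) ∂μ := hmono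
      _ = Real.exp (t ^ 2 * b ^ 2 / 2) * ∫ ω, Real.exp (t * R ω) ∂μ := integral_const_mul _ _
      _ ≤ Real.exp (t ^ 2 * b ^ 2 / 2) *
            Real.exp (t ^ 2 * (∑ j ∈ s, (v j.1 * (N1 j.1 : ℝ)) ^ 2) / 2) :=
          mul_le_mul_of_nonneg_left (ih) (Real.exp_nonneg _)
      _ = Real.exp (t ^ 2 * (∑ j ∈ insert j₀ s, (v j.1 * (N1 j.1 : ℝ)) ^ 2) / 2) := by
          rw [← Real.exp_add, Finset.sum_insert hj₀]
          congr 1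
          rw [hb]
          rw [show (|v j₀.1| * (N1 j₀.1 : ℝ)) ^ 2 = (v j₀.1 * (N1 j₀.1 : ℝ)) ^ 2 by
            rw [mul_pow, mul_pow, sq_abs]]
          ring
  -- apply with s = univ and rewrite both sides
  have hsum1 : ∀ ω, (∑ i, v i * S i ω * (∑ m : Fin (N2 i), e (Sum.inr ⟨i, m⟩) ω)) =
      ∑ j : Σ i : Fin n, Fin (N2 i), (v j.1 * S j.1 ω) * e (Sum.inr j) ω := by
    intro ω
    rw [← Finset.univ_sigma_univ, Finset.sum_sigma]
    refine Finset.sum_congr rfl fun i _ => ?_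
    rw [Finset.mul_sum]
  have hsum2 : (∑ j : Σ i : Fin n, Fin (N2 i), (v j.1 * (N1 j.1 : ℝ)) ^ 2) =
      ∑ i, (v i) ^ 2 * (N1 i : ℝ) ^ 2 * (N2 i : ℝ) := by
    rw [← Finset.univ_sigma_univ, Finset.sum_sigma]
    refine Finset.sum_congr rfl fun i _ => ?_
    simp [Finset.sum_const, Finset.card_univ, mul_pow]
    ring
  have := key Finset.univ
  rw [hsum2] at this
  calc ∫ ω, Real.exp (t * ∑ i, v i * S i ω * (∑ m : Fin (N2 i), e (Sum.inr ⟨i, m⟩) ω)) ∂μ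
      = ∫ ω, Real.exp (t * ∑ j : Σ i : Fin n, Fin (N2 i),
          (v j.1 * S j.1 ω) * e (Sum.inr j) ω) ∂μ := by
        refine integral_congr_ae (Filter.Eventually.of_forall fun ω => ?_)
        beta_reduce
        rw [hsum1 ω]
  _ ≤ _ := this
lemma chernoff_aux {Ω : Type*} [MeasurableSpace Ω] {μ : Measure Ω} [IsProbabilityMeasure μ]
    {X : Ω → ℝ} (W : ℝ) (hW : 0 < W)
    (hint : ∀ t : ℝ, Integrable (fun ω => Real.exp (t * X ω)) μ)
    (hmgf : ∀ t : ℝ, ∫ ω, Real.exp (t * X ω) ∂μ ≤ Real.exp (t ^ 2 * W / 2))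
    (τ : ℝ) (hτ : 0 < τ) :
    μ {ω | τ * Real.sqrt W < |X ω|} ≤ ENNReal.ofReal (2 * Real.exp (-τ ^ 2 / 2)) := by
  have hσ : 0 < Real.sqrt W := Real.sqrt_pos.2 hW
  have hσ2 : Real.sqrt W ^ 2 = W := Real.sq_sqrt hW.le
  set σ := Real.sqrt W with hσdef
  have ht : 0 < τ / σ := div_pos hτ hσ
  have hmgf' : ∀ t : ℝ, mgf X μ t ≤ Real.exp (t ^ 2 * W / 2) := by
    intro t; rw [mgf]; exact hmgf t
  have hsub : {ω | τ * σ < |X ω|} ⊆ {ω | τ * σ ≤ X ω} ∪ {ω | X ω ≤ -(τ * σ)} := by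
    intro ω hω
    simp only [Set.mem_setOf_eq] at hω
    rcases lt_abs.1 hω with h | h
    · exact Or.inl h.le
    · exact Or.inr (by simp only [Set.mem_setOf_eq]; linarith)
  have hexp : Real.exp (-(τ / σ) * (τ * σ) + (τ / σ) ^ 2 * W / 2) = Real.exp (-τ ^ 2 / 2) := by
    congr 1
    have h1 : (τ / σ) * (τ * σ) = τ ^ 2 := by field_simp
    have h2 : (τ / σ) ^ 2 * W = τ ^ 2 := by
      rw [← hσ2, div_pow]; field_simp
    rw [neg_mul, h1, h2]; ring
  have hb1 : μ {ω | τ * σ ≤ X ω} ≤ ENNReal.ofReal (Real.exp (-τ ^ 2 / 2)) := by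
    rw [ENNReal.le_ofReal_iff_toReal_le (measure_ne_top _ _) (Real.exp_nonneg _)]
    refine (measure_ge_le_exp_mul_mgf (τ * σ) ht.le (hint _)).trans ?_
    calc Real.exp (-(τ / σ) * (τ * σ)) * mgf X μ (τ / σ)
        ≤ Real.exp (-(τ / σ) * (τ * σ)) * Real.exp ((τ / σ) ^ 2 * W / 2) :=
          mul_le_mul_of_nonneg_left (hmgf' _) (Real.exp_nonneg _)
    _ = Real.exp (-(τ / σ) * (τ * σ) + (τ / σ) ^ 2 * W / 2) := (Real.exp_add _ _).symm
    _ = Real.exp (-τ ^ 2 / 2) := hexp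
  have hb2 : μ {ω | X ω ≤ -(τ * σ)} ≤ ENNReal.ofReal (Real.exp (-τ ^ 2 / 2)) := by
    rw [ENNReal.le_ofReal_iff_toReal_le (measure_ne_top _ _) (Real.exp_nonneg _)]
    refine (measure_le_le_exp_mul_mgf (-(τ * σ)) (t := -(τ / σ)) (by linarith) (hint _)).trans ?_
    calc Real.exp (-(-(τ / σ)) * -(τ * σ)) * mgf X μ (-(τ / σ))
        ≤ Real.exp (-(-(τ / σ)) * -(τ * σ)) * Real.exp ((-(τ / σ)) ^ 2 * W / 2) :=
          mul_le_mul_of_nonneg_left (hmgf' _) (Real.exp_nonneg _)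
    _ = Real.exp (-(-(τ / σ)) * -(τ * σ) + (-(τ / σ)) ^ 2 * W / 2) := (Real.exp_add _ _).symm
    _ = Real.exp (-τ ^ 2 / 2) := by
        rw [show -(-(τ / σ)) * -(τ * σ) = -(τ / σ) * (τ * σ) by ring,
          show (-(τ / σ)) ^ 2 = (τ / σ) ^ 2 by ring]
        exact hexp
  calc μ {ω | τ * σ < |X ω|} ≤ μ ({ω | τ * σ ≤ X ω} ∪ {ω | X ω ≤ -(τ * σ)}) := measure_mono hsub
  _ ≤ μ {ω | τ * σ ≤ X ω} + μ {ω | X ω ≤ -(τ * σ)} := measure_union_le _ _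
  _ ≤ ENNReal.ofReal (Real.exp (-τ ^ 2 / 2)) + ENNReal.ofReal (Real.exp (-τ ^ 2 / 2)) :=
      add_le_add hb1 hb2
  _ = ENNReal.ofReal (2 * Real.exp (-τ ^ 2 / 2)) := by
      rw [← ENNReal.ofReal_add (Real.exp_nonneg _) (Real.exp_nonneg _)]
      congr 1; ring

theorem rademacher_chaos_tail_bound
    {Ω : Type*} [MeasurableSpace Ω] (μ : Measure Ω) [IsProbabilityMeasure μ]
    (n : ℕ) (N1 N2 : Fin n → ℕ) (v : Fin n → ℝ)
    (e : ((Σ i : Fin n, Fin (N1 i)) ⊕ (Σ i : Fin n, Fin (N2 i))) → Ω → ℝ)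
    (hmeas : ∀ a, Measurable (e a))
    (hindep : iIndepFun e μ)
    (hrad : ∀ a, μ {ω | e a ω = 1} = 1 / 2 ∧ μ {ω | e a ω = -1} = 1 / 2) :
    ∀ τ : ℝ, 0 < τ →
      μ {ω |
          τ * Real.sqrt (min (∑ i, (v i) ^ 2 * (N1 i : ℝ) ^ 2 * (N2 i : ℝ))
              (∑ i, (v i) ^ 2 * (N1 i : ℝ) * (N2 i : ℝ) ^ 2)) <
            |∑ i, v i * (∑ ℓ : Fin (N1 i), e (Sum.inl ⟨i, ℓ⟩) ω) *
              (∑ m : Fin (N2 i), e (Sum.inr ⟨i, m⟩) ω)|} ≤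
        ENNReal.ofReal (4 * Real.exp (-τ ^ 2 / 2)) := by
  classical
  intro τ hτ
  set W1 : ℝ := ∑ i, (v i) ^ 2 * (N1 i : ℝ) ^ 2 * (N2 i : ℝ) with hW1
  set W2 : ℝ := ∑ i, (v i) ^ 2 * (N1 i : ℝ) * (N2 i : ℝ) ^ 2 with hW2
  set X : Ω → ℝ := fun ω => ∑ i, v i * (∑ ℓ : Fin (N1 i), e (Sum.inl ⟨i, ℓ⟩) ω) *
    (∑ m : Fin (N2 i), e (Sum.inr ⟨i, m⟩) ω) with hX
  have hXmeas : Measurable X := Finset.measurable_sum _ fun i _ =>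
    ((Finset.measurable_sum _ fun ℓ _ => hmeas _).const_mul _).mul
      (Finset.measurable_sum _ fun m _ => hmeas _)
  have hrad' := fun a => rad_aux (hmeas a) (hrad a).1 (hrad a).2
  have hae : ∀ᵐ ω ∂μ, ∀ a : ((Σ i : Fin n, Fin (N1 i)) ⊕ (Σ i : Fin n, Fin (N2 i))),
      e a ω = 1 ∨ e a ω = -1 := (MeasureTheory.ae_all_iff).2 fun a => (hrad' a).1
  have hXb : ∀ᵐ ω ∂μ, |X ω| ≤ ∑ i, |v i| * (N1 i : ℝ) * (N2 i : ℝ) := by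
    filter_upwards [hae] with ω hω
    calc |X ω| ≤ ∑ i, |v i * (∑ ℓ : Fin (N1 i), e (Sum.inl ⟨i, ℓ⟩) ω) *
        (∑ m : Fin (N2 i), e (Sum.inr ⟨i, m⟩) ω)| := Finset.abs_sum_le_sum_abs _ _
    _ ≤ ∑ i, |v i| * (N1 i : ℝ) * (N2 i : ℝ) := by
        refine Finset.sum_le_sum fun i _ => ?_
        rw [abs_mul, abs_mul]
        have h1 : |∑ ℓ : Fin (N1 i), e (Sum.inl ⟨i, ℓ⟩) ω| ≤ (N1 i : ℝ) := by
          calc |∑ ℓ : Fin (N1 i), e (Sum.inl ⟨i, ℓ⟩) ω|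
              ≤ ∑ ℓ : Fin (N1 i), |e (Sum.inl ⟨i, ℓ⟩) ω| := Finset.abs_sum_le_sum_abs _ _
          _ ≤ ∑ _ℓ : Fin (N1 i), (1 : ℝ) := Finset.sum_le_sum fun ℓ _ => by
              rcases hω (Sum.inl ⟨i, ℓ⟩) with h | h <;> rw [h] <;> norm_num
          _ = (N1 i : ℝ) := by simp
        have h2 : |∑ m : Fin (N2 i), e (Sum.inr ⟨i, m⟩) ω| ≤ (N2 i : ℝ) := by
          calc |∑ m : Fin (N2 i), e (Sum.inr ⟨i, m⟩) ω|
              ≤ ∑ m : Fin (N2 i), |e (Sum.inr ⟨i, m⟩) ω| := Finset.abs_sum_le_sum_abs _ _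
          _ ≤ ∑ _m : Fin (N2 i), (1 : ℝ) := Finset.sum_le_sum fun m _ => by
              rcases hω (Sum.inr ⟨i, m⟩) with h | h <;> rw [h] <;> norm_num
          _ = (N2 i : ℝ) := by simp
        calc |v i| * |∑ ℓ : Fin (N1 i), e (Sum.inl ⟨i, ℓ⟩) ω| *
            |∑ m : Fin (N2 i), e (Sum.inr ⟨i, m⟩) ω|
            ≤ |v i| * (N1 i : ℝ) * |∑ m : Fin (N2 i), e (Sum.inr ⟨i, m⟩) ω| :=
              mul_le_mul_of_nonneg_right
                (mul_le_mul_of_nonneg_left h1 (abs_nonneg _)) (abs_nonneg _)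
        _ ≤ |v i| * (N1 i : ℝ) * (N2 i : ℝ) :=
              mul_le_mul_of_nonneg_left h2 (by positivity)
  have hint : ∀ t : ℝ, Integrable (fun ω => Real.exp (t * X ω)) μ := by
    intro t
    refine Integrable.mono' (integrable_const
      (Real.exp (|t| * ∑ i, |v i| * (N1 i : ℝ) * (N2 i : ℝ))))
      ((hXmeas.const_mul t).exp.aestronglyMeasurable) ?_
    filter_upwards [hXb] with ω hω
    rw [Real.norm_eq_abs, abs_of_nonneg (Real.exp_nonneg _)]
    apply Real.exp_le_exp.2
    calc t * X ω ≤ |t * X ω| := le_abs_self _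
    _ = |t| * |X ω| := abs_mul _ _
    _ ≤ |t| * ∑ i, |v i| * (N1 i : ℝ) * (N2 i : ℝ) :=
        mul_le_mul_of_nonneg_left hω (abs_nonneg _)
  have hm1 : ∀ t : ℝ, ∫ ω, Real.exp (t * X ω) ∂μ ≤ Real.exp (t ^ 2 * W1 / 2) :=
    fun t => mgf_aux μ n N1 N2 v e hmeas hindep hrad t
  have hm2 : ∀ t : ℝ, ∫ ω, Real.exp (t * X ω) ∂μ ≤ Real.exp (t ^ 2 * W2 / 2) := by
    intro t
    set g := Equiv.sumComm ((Σ i : Fin n, Fin (N2 i))) ((Σ i : Fin n, Fin (N1 i))) with hg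
    have hindep' : iIndepFun (fun a => e (g a)) μ :=
      iIndepFun_reindex g hindep
    have h := mgf_aux μ n N2 N1 v (fun a => e (g a)) (fun a => hmeas _) hindep'
      (fun a => hrad _) t
    have hsum : ∀ ω, (∑ i, v i * (∑ m : Fin (N2 i), e (g (Sum.inl ⟨i, m⟩)) ω) *
        (∑ ℓ : Fin (N1 i), e (g (Sum.inr ⟨i, ℓ⟩)) ω)) = X ω := by
      intro ω
      refine Finset.sum_congr rfl fun i _ => ?_
      show v i * (∑ m : Fin (N2 i), e (Sum.inr ⟨i, m⟩) ω) *
        (∑ ℓ : Fin (N1 i), e (Sum.inl ⟨i, ℓ⟩) ω) = _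
      ring
    have hL : ∫ ω, Real.exp (t * ∑ i, v i * (∑ m : Fin (N2 i), e (g (Sum.inl ⟨i, m⟩)) ω) *
        (∑ ℓ : Fin (N1 i), e (g (Sum.inr ⟨i, ℓ⟩)) ω)) ∂μ = ∫ ω, Real.exp (t * X ω) ∂μ := by
      refine integral_congr_ae (Filter.Eventually.of_forall fun ω => ?_)
      beta_reduce
      rw [hsum ω]
    have hR : (∑ i, (v i) ^ 2 * (N2 i : ℝ) ^ 2 * (N1 i : ℝ)) = W2 := by
      rw [hW2]
      exact Finset.sum_congr rfl fun i _ => by ring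
    rw [hL, hR] at h
    exact h
  have hW1nn : (0:ℝ) ≤ W1 := Finset.sum_nonneg fun i _ => by positivity
  have hW2nn : (0:ℝ) ≤ W2 := Finset.sum_nonneg fun i _ => by positivity
  have hfinal : ENNReal.ofReal (2 * Real.exp (-τ ^ 2 / 2)) ≤
      ENNReal.ofReal (4 * Real.exp (-τ ^ 2 / 2)) :=
    ENNReal.ofReal_le_ofReal (by nlinarith [Real.exp_pos (-τ ^ 2 / 2)])
  -- degenerate case helper
  have hdeg : ∀ (W : ℝ), 0 ≤ W → ((W = 0 → ∀ ω, X ω = 0) → W = 0 →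
      μ {ω | τ * Real.sqrt (min W1 W2) < |X ω|} ≤
        ENNReal.ofReal (4 * Real.exp (-τ ^ 2 / 2))) := by
    intro W _ hzero hW0
    have hX0 := hzero hW0
    have hempty : {ω | τ * Real.sqrt (min W1 W2) < |X ω|} = ∅ := by
      ext ω
      simp only [Set.mem_setOf_eq, Set.mem_empty_iff_false, iff_false, not_lt, hX0 ω, abs_zero]
      positivity
    rw [hempty, measure_empty]
    exact bot_le
  have hzero1 : W1 = 0 → ∀ ω, X ω = 0 := by
    intro h0 ω
    have hterm := (Finset.sum_eq_zero_iff_of_nonneg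
      (fun i (_ : i ∈ Finset.univ) => by positivity)).1 h0
    refine Finset.sum_eq_zero fun i hi => ?_
    have h := hterm i hi
    rcases mul_eq_zero.1 h with h' | h'
    · rcases mul_eq_zero.1 h' with h'' | h''
      · have hv : v i = 0 := by
          have := pow_eq_zero_iff (two_ne_zero) |>.1 h''
          exact this
        rw [hv]; ring
    
      · have hN : N1 i = 0 := by
          have := pow_eq_zero_iff (two_ne_zero) |>.1 h''
          exact_mod_cast this
        haveI : IsEmpty (Fin (N1 i)) := by rw [hN]; infer_instance
        rw [Finset.univ_eq_empty (α := Fin (N1 i)), Finset.sum_empty]; ring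
    · have hN : N2 i = 0 := by exact_mod_cast h'
      haveI : IsEmpty (Fin (N2 i)) := by rw [hN]; infer_instance
      rw [Finset.univ_eq_empty (α := Fin (N2 i)), Finset.sum_empty]; ring
  have hzero2 : W2 = 0 → ∀ ω, X ω = 0 := by
    intro h0 ω
    have hterm := (Finset.sum_eq_zero_iff_of_nonneg
      (fun i (_ : i ∈ Finset.univ) => by positivity)).1 h0
    refine Finset.sum_eq_zero fun i hi => ?_
    have h := hterm i hi
    rcases mul_eq_zero.1 h with h' | h'
    · rcases mul_eq_zero.1 h' with h'' | h''
      · have hv : v i = 0 := by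
          have := pow_eq_zero_iff (two_ne_zero) |>.1 h''
          exact this
        rw [hv]; ring
      · have hN : N1 i = 0 := by exact_mod_cast h''
        haveI : IsEmpty (Fin (N1 i)) := by rw [hN]; infer_instance
        rw [Finset.univ_eq_empty (α := Fin (N1 i)), Finset.sum_empty]; ring
    · have hN : N2 i = 0 := by
        have := pow_eq_zero_iff (two_ne_zero) |>.1 h'
        exact_mod_cast this
      haveI : IsEmpty (Fin (N2 i)) := by rw [hN]; infer_instance
      rw [Finset.univ_eq_empty (α := Fin (N2 i)), Finset.sum_empty]; ring
  rcases le_total W1 W2 with hmin | hmin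
  · rcases eq_or_lt_of_le hW1nn with h0 | h0
    · exact hdeg W1 hW1nn hzero1 h0.symm
    · have := chernoff_aux W1 h0 hint hm1 τ hτ
      rw [min_eq_left hmin]
      exact this.trans hfinal
  · rcases eq_or_lt_of_le hW2nn with h0 | h0
    · exact hdeg W2 hW2nn hzero2 h0.symm
    · have := chernoff_aux W2 h0 hint hm2 τ hτ
      rw [min_eq_right hmin]
      exact this.trans hfinal
end

section
/- Let Z ≥ 0 be a random variable satisfying P(Z > η σ) ≤ (1 + 4√(2π) η) exp(−η²/2) for all η > 0 and some σ > 0. Then for any λ > 0, E[exp(λ Z)] ≤ 1 + 64√(2π) λσ + 16√(2π) λσ (1 + 32√(2π) λσ) exp(32 λ² σ²). -/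
set_option maxHeartbeats 1000000
open MeasureTheory

private lemma mgf_core_ineq {c a : ℝ} (hc2 : 2 ≤ c) (ha : 0 < a) :
    Real.exp ((a + 1) ^ 2 / 2) * (a + 16 * c * a) ≤
      64 * c * a + 16 * c * a * (1 + 32 * c * a) * Real.exp (32 * a ^ 2) := by
  have hc0 : (0 : ℝ) < c := by linarith
  have hca : (0 : ℝ) < c * a := mul_pos hc0 ha
  have hEpos : (0 : ℝ) < Real.exp (32 * a ^ 2) := Real.exp_pos _
  have hE1 : (1 : ℝ) ≤ Real.exp (32 * a ^ 2) := Real.one_le_exp (by positivity)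
  have heB : Real.exp ((a + 1) ^ 2 / 2) ≤ 3 * Real.exp (32 * a ^ 2) := by
    have h1 : (a + 1) ^ 2 / 2 ≤ 32 * a ^ 2 + 1 := by nlinarith [sq_nonneg (63 * a - 1)]
    calc Real.exp ((a + 1) ^ 2 / 2) ≤ Real.exp (32 * a ^ 2 + 1) := Real.exp_le_exp.mpr h1
      _ = Real.exp (32 * a ^ 2) * Real.exp 1 := Real.exp_add _ _
      _ ≤ Real.exp (32 * a ^ 2) * 3 := by
          nlinarith [Real.exp_one_lt_d9, Real.exp_pos (32 * a ^ 2)]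
      _ = 3 * Real.exp (32 * a ^ 2) := mul_comm _ _
  have h17 : a + 16 * c * a ≤ 17 * c * a := by nlinarith
  have h0 : (0 : ℝ) ≤ a + 16 * c * a := by nlinarith
  have hL : Real.exp ((a + 1) ^ 2 / 2) * (a + 16 * c * a) ≤
      51 * (c * a) * Real.exp (32 * a ^ 2) := by
    calc Real.exp ((a + 1) ^ 2 / 2) * (a + 16 * c * a)
        ≤ (3 * Real.exp (32 * a ^ 2)) * (17 * c * a) := by
          apply mul_le_mul heB h17 h0 (by positivity)
      _ = 51 * (c * a) * Real.exp (32 * a ^ 2) := by ring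
  rcases le_or_gt a (1 / 10) with h | h
  · have h32 : 32 * a ^ 2 ≤ 1 / 2 := by nlinarith
    have hE2 : Real.exp (32 * a ^ 2) ≤ 17 / 10 := by
      have h3 : Real.exp (32 * a ^ 2) ≤ Real.exp (1 / 2) := Real.exp_le_exp.mpr h32
      have h4 : Real.exp (1 / 2) ≤ 17 / 10 := by
        nlinarith [Real.exp_one_lt_d9, Real.exp_pos (1 / 2),
          Real.exp_add (1 / 2) (1 / 2), Real.add_one_le_exp (1 / 2)]
      linarith
    have h5 : 35 * (c * a) * Real.exp (32 * a ^ 2) ≤ (119 / 2) * (c * a) := by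
      nlinarith [mul_le_mul_of_nonneg_left hE2 (le_of_lt (mul_pos hc0 ha))]
    have h6 : (0 : ℝ) ≤ 512 * (c * a) ^ 2 * Real.exp (32 * a ^ 2) := by positivity
    nlinarith [hL, h5, h6, hca, hE1]
  · have h8 : (1 : ℝ) / 5 ≤ c * a := by nlinarith
    have h9 : (0 : ℝ) ≤ (c * a) * Real.exp (32 * a ^ 2) * (512 * (c * a) - 35) := by
      apply mul_nonneg (mul_nonneg hca.le hEpos.le)
      nlinarith
    nlinarith [hL, h9, hca, hE1]

theorem tail_to_mgf_conversion
    {Ω : Type*} [MeasurableSpace Ω] (μ : Measure Ω) [IsProbabilityMeasure μ]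
    (Z : Ω → ℝ) (hZnn : ∀ ω, 0 ≤ Z ω) (σ : ℝ) (hσ : 0 < σ)
    (htail : ∀ η : ℝ, 0 < η →
      μ {ω | η * σ < Z ω} ≤
        ENNReal.ofReal ((1 + 4 * Real.sqrt (2 * Real.pi) * η) * Real.exp (-η ^ 2 / 2))) :
    ∀ l : ℝ, 0 < l →
      ∫⁻ ω, ENNReal.ofReal (Real.exp (l * Z ω)) ∂μ ≤
        ENNReal.ofReal
          (1 + 64 * Real.sqrt (2 * Real.pi) * l * σ +
            16 * Real.sqrt (2 * Real.pi) * l * σ *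
              (1 + 32 * Real.sqrt (2 * Real.pi) * l * σ) * Real.exp (32 * l ^ 2 * σ ^ 2)) := by
  intro l hl
  set c : ℝ := Real.sqrt (2 * Real.pi) with hc_def
  have hc2 : (2 : ℝ) ≤ c := by
    have hpi : (3 : ℝ) < Real.pi := Real.pi_gt_three
    have hsq : c ^ 2 = 2 * Real.pi := Real.sq_sqrt (by positivity)
    nlinarith [Real.sqrt_nonneg (2 * Real.pi)]
  have hc0 : (0 : ℝ) < c := by linarith
  have ha : (0 : ℝ) < l * σ := mul_pos hl hσ
  have ha0 : l * σ ≠ 0 := ne_of_gt ha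
  -- measurable minorant
  obtain ⟨g, gmeas, gle, geq⟩ :=
    exists_measurable_le_lintegral_eq μ (fun ω => ENNReal.ofReal (Real.exp (l * Z ω)))
  set f : Ω → ℝ := fun ω => (g ω).toReal with hf_def
  have hfm : Measurable f := gmeas.ennreal_toReal
  have hgne : ∀ ω, g ω ≠ ⊤ := fun ω =>
    (lt_of_le_of_lt (gle ω) ENNReal.ofReal_lt_top).ne
  have hfle : ∀ ω, f ω ≤ Real.exp (l * Z ω) := by
    intro ω
    have h1 : (g ω).toReal ≤ (ENNReal.ofReal (Real.exp (l * Z ω))).toReal :=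
      ENNReal.toReal_mono ENNReal.ofReal_ne_top (gle ω)
    rwa [ENNReal.toReal_ofReal (Real.exp_nonneg _)] at h1
  have hf0 : ∀ ω, 0 ≤ f ω := fun ω => ENNReal.toReal_nonneg
  have h0 : ∫⁻ ω, ENNReal.ofReal (Real.exp (l * Z ω)) ∂μ =
      ∫⁻ t in Set.Ioi (0 : ℝ), μ {ω | t < f ω} := by
    rw [geq, lintegral_congr (fun ω => (ENNReal.ofReal_toReal (hgne ω)).symm)]
    exact lintegral_eq_lintegral_meas_lt μ (ae_of_all _ hf0) hfm.aemeasurable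
  -- exponents
  set p1 : ℝ := -(1 + 1 / (l * σ)) with hp1_def
  set p2 : ℝ := -(1 + 1 / (2 * (l * σ))) with hp2_def
  set Bc : ℝ := (l * σ + 1) ^ 2 / 2 with hBc_def
  -- pointwise tail bound on Ioi 1
  have claim2a : ∀ t ∈ Set.Ioi (1 : ℝ), μ {ω | t < f ω} ≤
      ENNReal.ofReal (Real.exp Bc * (t ^ p1 + 8 * c * t ^ p2)) := by
    intro t ht
    rw [Set.mem_Ioi] at ht
    have ht0 : (0 : ℝ) < t := lt_trans one_pos ht
    set η : ℝ := Real.log t / (l * σ) with hη_def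
    have hlogt : 0 < Real.log t := Real.log_pos ht
    have hη : 0 < η := div_pos hlogt ha
    have hlog_eq : Real.log t = (l * σ) * η := by
      rw [hη_def]; field_simp
    have hstep1 : μ {ω | t < f ω} ≤ μ {ω | η * σ < Z ω} := by
      apply measure_mono
      intro ω hω
      simp only [Set.mem_setOf_eq] at hω ⊢
      have h2 : t < Real.exp (l * Z ω) := lt_of_lt_of_le hω (hfle ω)
      have h3 : Real.log t < l * Z ω := (Real.log_lt_iff_lt_exp ht0).mpr h2
      have h4 : η * σ = Real.log t / l := by
        rw [hη_def]; field_simp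
      rw [h4, div_lt_iff₀ hl]
      linarith [h3]
    refine le_trans hstep1 (le_trans (htail η hη) (ENNReal.ofReal_le_ofReal ?_))
    -- real pointwise inequality
    have hr1 : t ^ p1 = Real.exp ((l * σ) * η * p1) := by
      rw [Real.rpow_def_of_pos ht0, hlog_eq]
    have hr2 : t ^ p2 = Real.exp ((l * σ) * η * p2) := by
      rw [Real.rpow_def_of_pos ht0, hlog_eq]
    rw [hr1, hr2]
    have hexp1 : (l * σ) * η * p1 = -((l * σ) * η + η) := by
      rw [hp1_def]; field_simp
    have hexp2 : (l * σ) * η * p2 = -((l * σ) * η + η / 2) := by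
      rw [hp2_def]; field_simp
    have e1 : Real.exp (-η ^ 2 / 2) ≤ Real.exp Bc * Real.exp ((l * σ) * η * p1) := by
      rw [← Real.exp_add]
      apply Real.exp_le_exp.mpr
      rw [hexp1, hBc_def]
      nlinarith [sq_nonneg (l * σ + 1 - η)]
    have e2 : 4 * c * η * Real.exp (-η ^ 2 / 2) ≤
        8 * c * (Real.exp Bc * Real.exp ((l * σ) * η * p2)) := by
      have hxe : η ≤ 2 * Real.exp (η / 2) := by
        nlinarith [Real.add_one_le_exp (η / 2), Real.exp_pos (η / 2)]
      have step : 4 * c * η * Real.exp (-η ^ 2 / 2) ≤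
          8 * c * (Real.exp (η / 2) * Real.exp (-η ^ 2 / 2)) := by
        have := Real.exp_pos (-η ^ 2 / 2)
        nlinarith [mul_le_mul_of_nonneg_left hxe (by positivity : (0:ℝ) ≤ 4 * c * Real.exp (-η ^ 2 / 2))]
      refine le_trans step ?_
      apply mul_le_mul_of_nonneg_left _ (by positivity)
      rw [← Real.exp_add, ← Real.exp_add]
      apply Real.exp_le_exp.mpr
      rw [hexp2, hBc_def]
      nlinarith [sq_nonneg (l * σ + 1 - η)]
    linarith [e1, e2]
  -- integrability and value of the bounding integral
  have hp1lt : p1 < -1 := by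
    rw [hp1_def]
    have : 0 < 1 / (l * σ) := by positivity
    linarith
  have hp2lt : p2 < -1 := by
    rw [hp2_def]
    have : 0 < 1 / (2 * (l * σ)) := by positivity
    linarith
  have hi1 : IntegrableOn (fun t : ℝ => t ^ p1) (Set.Ioi 1) volume :=
    integrableOn_Ioi_rpow_of_lt hp1lt one_pos
  have hi2 : IntegrableOn (fun t : ℝ => t ^ p2) (Set.Ioi 1) volume :=
    integrableOn_Ioi_rpow_of_lt hp2lt one_pos
  have hint : IntegrableOn
      (fun t : ℝ => Real.exp Bc * (t ^ p1 + 8 * c * t ^ p2)) (Set.Ioi 1) volume :=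
    ((hi1.add (hi2.const_mul (8 * c))).const_mul (Real.exp Bc))
  have hv1 : ∫ t in Set.Ioi (1 : ℝ), t ^ p1 = l * σ := by
    rw [integral_Ioi_rpow_of_lt hp1lt one_pos, Real.one_rpow]
    rw [hp1_def]
    field_simp
    ring
  have hv2 : ∫ t in Set.Ioi (1 : ℝ), t ^ p2 = 2 * (l * σ) := by
    rw [integral_Ioi_rpow_of_lt hp2lt one_pos, Real.one_rpow]
    rw [hp2_def]
    field_simp
    ring
  have hval : ∫ t in Set.Ioi (1 : ℝ), Real.exp Bc * (t ^ p1 + 8 * c * t ^ p2) =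
      Real.exp Bc * ((l * σ) + 16 * c * (l * σ)) := by
    rw [integral_const_mul, integral_add hi1 (hi2.const_mul (8 * c)),
      integral_const_mul, hv1, hv2]
    ring
  have hnn : 0 ≤ᵐ[volume.restrict (Set.Ioi (1 : ℝ))]
      fun t => Real.exp Bc * (t ^ p1 + 8 * c * t ^ p2) := by
    filter_upwards [ae_restrict_mem measurableSet_Ioi] with t ht
    rw [Set.mem_Ioi] at ht
    have ht0 : (0 : ℝ) ≤ t := le_of_lt (lt_trans one_pos ht)
    exact mul_nonneg (Real.exp_nonneg _)
      (add_nonneg (Real.rpow_nonneg ht0 _)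
        (mul_nonneg (by positivity) (Real.rpow_nonneg ht0 _)))
  have part2 : ∫⁻ t in Set.Ioi (1 : ℝ), μ {ω | t < f ω} ≤
      ENNReal.ofReal (Real.exp Bc * ((l * σ) + 16 * c * (l * σ))) := by
    calc ∫⁻ t in Set.Ioi (1 : ℝ), μ {ω | t < f ω}
        ≤ ∫⁻ t in Set.Ioi (1 : ℝ),
            ENNReal.ofReal (Real.exp Bc * (t ^ p1 + 8 * c * t ^ p2)) :=
          setLIntegral_mono' measurableSet_Ioi claim2a
      _ = ENNReal.ofReal (∫ t in Set.Ioi (1 : ℝ),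
            Real.exp Bc * (t ^ p1 + 8 * c * t ^ p2)) :=
          (ofReal_integral_eq_lintegral_ofReal hint hnn).symm
      _ = ENNReal.ofReal (Real.exp Bc * ((l * σ) + 16 * c * (l * σ))) := by rw [hval]
  have part1 : ∫⁻ t in Set.Ioc (0 : ℝ) 1, μ {ω | t < f ω} ≤ 1 := by
    calc ∫⁻ t in Set.Ioc (0 : ℝ) 1, μ {ω | t < f ω}
        ≤ ∫⁻ _ in Set.Ioc (0 : ℝ) 1, 1 :=
          setLIntegral_mono' measurableSet_Ioc (fun t _ => prob_le_one)
      _ = volume (Set.Ioc (0 : ℝ) 1) := setLIntegral_one _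
      _ = 1 := by rw [Real.volume_Ioc]; norm_num
  rw [h0, ← Set.Ioc_union_Ioi_eq_Ioi (zero_le_one (α := ℝ)),
    lintegral_union measurableSet_Ioi (Set.Ioc_disjoint_Ioi le_rfl)]
  calc (∫⁻ t in Set.Ioc (0 : ℝ) 1, μ {ω | t < f ω}) +
        ∫⁻ t in Set.Ioi (1 : ℝ), μ {ω | t < f ω}
      ≤ 1 + ENNReal.ofReal (Real.exp Bc * ((l * σ) + 16 * c * (l * σ))) :=
        add_le_add part1 part2
    _ ≤ ENNReal.ofReal
          (1 + 64 * c * l * σ +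
            16 * c * l * σ * (1 + 32 * c * l * σ) * Real.exp (32 * l ^ 2 * σ ^ 2)) := by
        rw [← ENNReal.ofReal_one,
          ← ENNReal.ofReal_add (by norm_num) (by positivity)]
        apply ENNReal.ofReal_le_ofReal
        have hkey := mgf_core_ineq hc2 ha
        have h32 : 32 * l ^ 2 * σ ^ 2 = 32 * (l * σ) ^ 2 := by ring
        rw [h32, hBc_def]
        nlinarith [hkey]
end
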